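/- Under the standard assumptions on the utility U, the effective domain of the concave envelope U** equals the effective domain of U, i.e., {x : U**(x) > -∞} = {x : U(x) > -∞}. -/
import Mathlib


open Filter Set

noncomputable section

/-- Concavity for `EReal`-valued functions on `ℝ`. -/
def IsConcaveE (f : ℝ → EReal) : Prop :=
  ∀ x y : ℝ, ∀ t : ℝ, 0 ≤ t → t ≤ 1 →
    (t : EReal) * f x + ((1 - t : ℝ) : EReal) * f y ≤ f (t * x + (1 - t) * y)

/-- `Uenv` is the concave envelope of `U`: the smallest concave function ≥ `U`. -/
def IsConcaveEnvelope (U Uenv : ℝ → EReal) : Prop :=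
  IsConcaveE Uenv ∧ (∀ x, U x ≤ Uenv x) ∧
    ∀ g : ℝ → EReal, IsConcaveE g → (∀ x, U x ≤ g x) → ∀ x, Uenv x ≤ g x

/-- Standard assumptions on the utility `U : ℝ → ℝ ∪ {-∞}` with effective domain
`[L,∞)` or `(L,∞)`, `L` finite. -/
structure StdUtility (U : ℝ → EReal) (L : ℝ) : Prop where
  mono : Monotone U
  usc : UpperSemicontinuous U
  ne_top : ∀ x, U x ≠ ⊤
  dom_sub : ∀ x : ℝ, U x ≠ ⊥ → L ≤ x
  dom_sup : ∀ x : ℝ, L < x → U x ≠ ⊥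
  tendsto_top : Tendsto U atTop (nhds (⊤ : EReal))
  affine_dom : ∃ A B : ℝ, ∀ x : ℝ, U x ≠ ⊥ → U x < ((A * x + B : ℝ) : EReal)

/-- The effective domain of the concave envelope equals the effective domain of `U`. -/
theorem concave_envelope_dom_eq (U Uenv : ℝ → EReal) (L : ℝ)
    (hU : StdUtility U L) (henv : IsConcaveEnvelope U Uenv) :
    {x : ℝ | Uenv x ≠ ⊥} = {x : ℝ | U x ≠ ⊥} := by
  obtain ⟨A, B, hAB⟩ := hU.affine_dom
  set g : ℝ → EReal := fun x => if U x = ⊥ then ⊥ else ((A * x + B : ℝ) : EReal) with hg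
  have hUg : ∀ x, U x ≤ g x := by
    intro x
    by_cases hx : U x = ⊥
    · simp [hg, hx]
    · simp only [hg, hx, if_neg]
      exact le_of_lt (hAB x hx)
  have hgconc : IsConcaveE g := by
    intro x y t ht0 ht1
    rcases eq_or_lt_of_le ht0 with h0 | h0
    · subst h0
      simp
    rcases eq_or_lt_of_le ht1 with h1 | h1
    · subst h1
      simp
    by_cases hx : U x = ⊥
    · have : g x = ⊥ := by simp [hg, hx]
      rw [this, EReal.mul_bot_of_pos (by exact_mod_cast h0), EReal.bot_add]
      exact bot_le
    by_cases hy : U y = ⊥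
    · have : g y = ⊥ := by simp [hg, hy]
      rw [this, EReal.mul_bot_of_pos (by exact_mod_cast (by linarith : (0:ℝ) < 1 - t)),
        EReal.add_bot]
      exact bot_le
    · have hz : U (t * x + (1 - t) * y) ≠ ⊥ := by
        have hmin : min x y ≤ t * x + (1 - t) * y := by
          rcases le_total x y with h | h
          · have : min x y = x := min_eq_left h
            rw [this]; nlinarith
          · have : min x y = y := min_eq_right h
            rw [this]; nlinarith
        have hUmin : U (min x y) ≠ ⊥ := by
          rcases le_total x y with h | h
          · rw [min_eq_left h]; exact hx
          · rw [min_eq_right h]; exact hy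
        intro hcon
        exact hUmin (le_bot_iff.mp (hcon ▸ hU.mono hmin))
      simp only [hg, hx, hy, hz, if_neg, ne_eq, not_false_eq_true]
      apply le_of_eq
      rw [← EReal.coe_mul, ← EReal.coe_mul, ← EReal.coe_add]
      norm_cast
      ring
  ext x
  simp only [mem_setOf_eq]
  constructor
  · intro h hx
    apply h
    have := henv.2.2 g hgconc hUg x
    have hgx : g x = ⊥ := by simp [hg, hx]
    exact le_bot_iff.mp (hgx ▸ this)
  · intro h hx
    exact h (le_bot_iff.mp (hx ▸ henv.2.1 x))
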